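/- Let A be a finite-dimensional algebra, M a τ-rigid module, and N any module. If 0 → N_t → N → N_f → 0 is the canonical sequence of N with respect to the torsion pair (⊥(τM), Sub τM), then for every submodule N₀ of N, ⟨−g_M, dim N₀⟩ ≤ ⟨−g_M, dim N_t⟩ = dim_k Hom_A(M, N). -/
import Mathlib

section Aux

variable (k A N : Type) [Field k] [Ring A] [Algebra k A] [AddCommGroup N] [Module A N]
    [Module k N] [IsScalarTower k A N] [FiniteDimensional k N] [SMulCommClass A k N]
    (P : Submodule A N)

noncomputable instance aux_scc : SMulCommClass A k P :=
  ⟨fun a c x => Subtype.ext (smul_comm a c (x : N))⟩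

noncomputable instance aux_fd : FiniteDimensional k P :=
  FiniteDimensional.of_injective (P.subtype.restrictScalars k) Subtype.coe_injective

variable (M : Type) [AddCommGroup M] [Module A M] [Module k M] [IsScalarTower k A M]
    [FiniteDimensional k M] [SMulCommClass A k M]

/-- composition with inclusion, as a `k`-linear map -/
noncomputable def auxComp : (M →ₗ[A] P) →ₗ[k] (M →ₗ[A] N) where
  toFun f := P.subtype.comp f
  map_add' f g := by ext x; rfl
  map_smul' c f := by ext x; rfl

set_option linter.unusedSectionVars false in
lemma auxComp_inj : Function.Injective (auxComp k A N P M) := by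
  intro f g h
  ext x
  exact DFunLike.congr_fun h x

end Aux

theorem submodule_pairing_le_canonical (n : ℕ) (k A : Type) [Field k] [Ring A] [Algebra k A]
    [FiniteDimensional k A]
    (M : Type) [AddCommGroup M] [Module A M] [Module k M] [IsScalarTower k A M]
    [FiniteDimensional k M] [SMulCommClass A k M]
    (τM : Type) [AddCommGroup τM] [Module A τM] [Module k τM] [IsScalarTower k A τM]
    [FiniteDimensional k τM] [SMulCommClass A k τM]
    (N : Type) [AddCommGroup N] [Module A N] [Module k N] [IsScalarTower k A N]
    [FiniteDimensional k N] [SMulCommClass A k N]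
    (dimVec : (X : Type) → [AddCommGroup X] → [Module A X] → Fin n → ℕ)
    (gM : Fin n → ℤ)
    -- the Auslander–Reiten formula characterizing the g-vector of M
    (hAR : ∀ (X : Type) [AddCommGroup X] [Module A X] [Module k X] [IsScalarTower k A X]
        [FiniteDimensional k X] [SMulCommClass A k X],
      (∑ i, gM i * (dimVec X i : ℤ)) =
        (Module.finrank k (X →ₗ[A] τM) : ℤ) - (Module.finrank k (M →ₗ[A] X) : ℤ))
    -- M is τ-rigid
    (hrigid : ∀ f : M →ₗ[A] τM, f = 0)
    -- canonical sequence: N_t = S ∈ ⊥(τM), N_f = N ⧸ S ∈ Sub τM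
    (S : Submodule A N)
    (hperp : ∀ f : S →ₗ[A] τM, f = 0)
    (hSub : ∃ (m : ℕ) (f : (N ⧸ S) →ₗ[A] (Fin m → τM)), Function.Injective f) :
    (∀ S₀ : Submodule A N,
      (∑ i, (-gM i) * (dimVec S₀ i : ℤ)) ≤ ∑ i, (-gM i) * (dimVec S i : ℤ)) ∧
    (∑ i, (-gM i) * (dimVec S i : ℤ)) = (Module.finrank k (M →ₗ[A] N) : ℤ) := by
  -- key identity for any submodule
  have key : ∀ P : Submodule A N,
      (∑ i, (-gM i) * (dimVec P i : ℤ)) =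
        (Module.finrank k (M →ₗ[A] P) : ℤ) - (Module.finrank k (P →ₗ[A] τM) : ℤ) := by
    intro P
    have h := hAR P
    have : (∑ i, (-gM i) * (dimVec P i : ℤ)) = -(∑ i, gM i * (dimVec P i : ℤ)) := by
      rw [← Finset.sum_neg_distrib]
      exact Finset.sum_congr rfl fun i _ => (neg_mul _ _)
    rw [this, h]; ring
  -- Hom(M, N) is finite dimensional over k
  haveI : FiniteDimensional k (M →ₗ[A] N) :=
    FiniteDimensional.of_injective
      (LinearMap.restrictScalarsₗ k A M N k)
      (LinearMap.restrictScalars_injective k)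
  -- for every submodule, finrank Hom(M,P) ≤ finrank Hom(M,N)
  have hle : ∀ P : Submodule A N,
      Module.finrank k (M →ₗ[A] P) ≤ Module.finrank k (M →ₗ[A] N) :=
    fun P => LinearMap.finrank_le_finrank_of_injective (auxComp_inj k A N P M)
  -- Hom(S, τM) = 0
  haveI hsub : Subsingleton ((S : Type) →ₗ[A] τM) :=
    ⟨fun f g => by rw [hperp f, hperp g]⟩
  have hS0 : Module.finrank k ((S : Type) →ₗ[A] τM) = 0 :=
    Module.finrank_zero_of_subsingleton
  -- every f : M →ₗ[A] N lands inside S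
  obtain ⟨m, g, hg⟩ := hSub
  have hland : ∀ (f : M →ₗ[A] N) (x : M), f x ∈ S := by
    intro f x
    have comp0 : ∀ i : Fin m,
        ((LinearMap.proj i : (Fin m → τM) →ₗ[A] τM).comp (g.comp (S.mkQ.comp f))) = 0 :=
      fun i => hrigid _
    have hz : g (S.mkQ (f x)) = 0 := by
      funext i
      exact DFunLike.congr_fun (comp0 i) x
    have : S.mkQ (f x) = 0 := hg (by rw [hz, map_zero])
    exact (Submodule.Quotient.mk_eq_zero S).mp this
  -- surjectivity of composition with inclusion for S
  have hsurj : Function.Surjective (auxComp k A N S M) := by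
    intro f
    exact ⟨f.codRestrict S (hland f), by ext x; rfl⟩
  have heq : Module.finrank k (M →ₗ[A] (S : Type)) = Module.finrank k (M →ₗ[A] N) :=
    LinearEquiv.finrank_eq
      (LinearEquiv.ofBijective (auxComp k A N S M) ⟨auxComp_inj k A N S M, hsurj⟩)
  constructor
  · intro S₀
    rw [key S₀, key S, hS0, heq]
    have h1 : (Module.finrank k ((S₀ : Type) →ₗ[A] τM) : ℤ) ≥ 0 := Int.ofNat_nonneg _
    have h2 : (Module.finrank k (M →ₗ[A] (S₀ : Type)) : ℤ) ≤
        (Module.finrank k (M →ₗ[A] N) : ℤ) := Int.ofNat_le.mpr (hle S₀)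
    omega
  · rw [key S, hS0, heq]; ring
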